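/- Each hypergraph graded modal logic classifier is captured by an HR-MPNN: for every HGML formula φ(x) over a vocabulary of relation types R with arities and node colors C, there exist L ≥ 0, an HR-MPNN with L layers whose initial feature map assigns to each node the one-hot encoding of its color, and a designated coordinate p of the final feature vectors, such that for every relational hypergraph G = (V, E, R, c) with colors in C and every node v ∈ V, the p-th entry of h_v^(L) equals 1 if G ⊨ φ(v) and equals 0 otherwise. -/

import Mathlib

/-- A relational hypergraph over node set `V`, relation types `R` with arities `ar`.
A hyperedge (fact) `r(u₁,…,u_k)` is a pair of a relation type `r` and the tuple of
its nodes, of length `k = ar r`. -/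
structure RelHG (V R : Type) (ar : R → ℕ) where
  edges : Finset (Σ r : R, Fin (ar r) → V)

variable {V R D : Type} {ar : R → ℕ}

/-- `E(v)`: the set of edge–position pairs `(e, i)` with `e(i) = v`. -/
def RelHG.incid [DecidableEq V] (H : RelHG V R ar) (v : V) :
    Finset (Σ e : Σ r : R, Fin (ar r) → V, Fin (ar e.1)) :=
  (H.edges.sigma fun e => (Finset.univ : Finset (Fin (ar e.1)))).filter
    fun p => p.1.2 p.2 = v

/-- Colors used by the canonical (`τ = id`) hypergraph relational 1-WL test after `ℓ`
rounds, starting from colors in `D`. -/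
def WLC (D R : Type) : ℕ → Type :=
  fun ℓ => Nat.rec D (fun _ ih => ih × Multiset (Set (ih × ℕ) × R)) ℓ

/-- The hypergraph relational 1-WL test `hrwl₁`, with the canonical injective `τ`
(pairing), starting from the node coloring `c`. -/
def RelHG.hrwl [DecidableEq V] (H : RelHG V R ar) (c : V → D) :
    (ℓ : ℕ) → V → WLC D R ℓ
  | 0 => c
  | ℓ + 1 => fun v =>
      ⟨RelHG.hrwl H c ℓ v,
        (H.incid v).val.map fun ei =>
          ({p : WLC D R ℓ × ℕ |
              ∃ j : Fin (ar ei.1.1), j ≠ ei.2 ∧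
                p = (RelHG.hrwl H c ℓ (ei.1.2 j), (j : ℕ))},
            ei.1.1)⟩

/-- A hypergraph relational MPNN (HR-MPNN): layer dimensions `d`, message spaces `M`,
aggregation spaces `A`, and arbitrary relation-specific message, aggregation and
update functions for every layer. -/
structure HRMPNN (R : Type) where
  d : ℕ → ℕ
  M : ℕ → Type
  A : ℕ → Type
  msg : (ℓ : ℕ) → R → Set ((Fin (d ℓ) → ℝ) × ℕ) → M ℓ
  agg : (ℓ : ℕ) → (Fin (d ℓ) → ℝ) → Multiset (M ℓ) → A ℓ
  up : (ℓ : ℕ) → (Fin (d ℓ) → ℝ) → A ℓ → Fin (d (ℓ + 1)) → ℝ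

/-- The feature maps `h⁽ℓ⁾` computed by an HR-MPNN on a relational hypergraph `H`
from the initial feature map `x`. -/
def HRMPNN.h [DecidableEq V] (net : HRMPNN R) (H : RelHG V R ar)
    (x : V → Fin (net.d 0) → ℝ) : (ℓ : ℕ) → V → Fin (net.d ℓ) → ℝ
  | 0 => x
  | ℓ + 1 => fun v =>
      net.up ℓ (HRMPNN.h net H x ℓ v)
        (net.agg ℓ (HRMPNN.h net H x ℓ v)
          ((H.incid v).val.map fun ei =>
            net.msg ℓ ei.1.1
              {p : (Fin (net.d ℓ) → ℝ) × ℕ |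
                ∃ j : Fin (ar ei.1.1), j ≠ ei.2 ∧
                  p = (HRMPNN.h net H x ℓ (ei.1.2 j), (j : ℕ))}))

mutual
/-- Formulas of hypergraph graded modal logic (HGML) over relation types `R` with
arities `ar` and node colors `C`.  `count r i N hN Ψ` is the formula
`∃^{≥N} ỹ (r(y₁,…,y_{i-1},x,y_{i+1},…,y_{ar r}) ∧ Ψ(ỹ))` where `N ≥ 1`. -/
inductive HGML (R C : Type) (ar : R → ℕ) : Type where
  | color : C → HGML R C ar
  | fnot : HGML R C ar → HGML R C ar
  | fand : HGML R C ar → HGML R C ar → HGML R C ar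
  | count : (r : R) → (i : Fin (ar r)) → (N : ℕ) → 1 ≤ N →
      BComb R C ar (ar r) i → HGML R C ar

/-- Boolean combinations of HGML formulas whose free variables range over the
positions `j ≠ i` of a relation of arity `k` (the tuple `ỹ`). -/
inductive BComb (R C : Type) (ar : R → ℕ) : (k : ℕ) → Fin k → Type where
  | atom : {k : ℕ} → {i : Fin k} → (j : Fin k) → j ≠ i → HGML R C ar → BComb R C ar k i
  | bnot : {k : ℕ} → {i : Fin k} → BComb R C ar k i → BComb R C ar k i
  | band : {k : ℕ} → {i : Fin k} → BComb R C ar k i → BComb R C ar k i →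
      BComb R C ar k i
end

variable {C : Type}

mutual
/-- Satisfaction `G ⊨ φ(v)` of an HGML formula at a node of a relational
hypergraph `H` with node coloring `c`.  In the counting case we count full tuples
`w : Fin (ar r) → V` with `w i = v`, which are in bijection with the tuples `ỹ`. -/
def HGML.sat (H : RelHG V R ar) (c : V → C) : HGML R C ar → V → Prop
  | .color a, v => c v = a
  | .fnot φ, v => ¬ HGML.sat H c φ v
  | .fand φ ψ, v => HGML.sat H c φ v ∧ HGML.sat H c ψ v
  | .count r i N _ Ψ, v =>
      ∃ s : Finset (Fin (ar r) → V),
        N ≤ s.card ∧ ∀ w ∈ s, w i = v ∧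
          (⟨r, w⟩ : Σ r' : R, Fin (ar r') → V) ∈ H.edges ∧ BComb.sat H c Ψ w

/-- Satisfaction of a Boolean combination under an assignment `w` of the variables. -/
def BComb.sat (H : RelHG V R ar) (c : V → C) :
    {k : ℕ} → {i : Fin k} → BComb R C ar k i → (Fin k → V) → Prop
  | _, _, .atom j _ φ, w => HGML.sat H c φ (w j)
  | _, _, .bnot Ψ, w => ¬ BComb.sat H c Ψ w
  | _, _, .band Ψ₁ Ψ₂, w => BComb.sat H c Ψ₁ w ∧ BComb.sat H c Ψ₂ w
end


namespace Cap

open scoped Classical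

variable {V R C : Type} {ar : R → ℕ}

mutual
def dep : HGML R C ar → ℕ
  | .color _ => 1
  | .fnot ψ => dep ψ + 1
  | .fand ψ χ => max (dep ψ) (dep χ) + 1
  | .count _ _ _ _ Ψ => depB Ψ + 1

def depB : {k : ℕ} → {i : Fin k} → BComb R C ar k i → ℕ
  | _, _, .atom _ _ ψ => dep ψ
  | _, _, .bnot Ψ => depB Ψ
  | _, _, .band Ψ₁ Ψ₂ => max (depB Ψ₁) (depB Ψ₂)
end

def atoms : {k : ℕ} → {i : Fin k} → BComb R C ar k i → List (HGML R C ar)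
  | _, _, .atom _ _ ψ => [ψ]
  | _, _, .bnot Ψ => atoms Ψ
  | _, _, .band Ψ₁ Ψ₂ => atoms Ψ₁ ++ atoms Ψ₂

def children : HGML R C ar → List (HGML R C ar)
  | .color _ => []
  | .fnot ψ => [ψ]
  | .fand ψ χ => [ψ, χ]
  | .count _ _ _ _ Ψ => atoms Ψ

mutual
def subf : HGML R C ar → List (HGML R C ar)
  | .color a => [.color a]
  | .fnot ψ => .fnot ψ :: subf ψ
  | .fand ψ χ => .fand ψ χ :: (subf ψ ++ subf χ)
  | .count r i N h Ψ => .count r i N h Ψ :: subfB Ψ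

def subfB : {k : ℕ} → {i : Fin k} → BComb R C ar k i → List (HGML R C ar)
  | _, _, .atom _ _ ψ => subf ψ
  | _, _, .bnot Ψ => subfB Ψ
  | _, _, .band Ψ₁ Ψ₂ => subfB Ψ₁ ++ subfB Ψ₂
end

theorem dep_pos (σ : HGML R C ar) : 1 ≤ dep σ := by
  cases σ <;> simp only [dep] <;> omega

theorem depB_pos : ∀ {k : ℕ} {i : Fin k} (Ψ : BComb R C ar k i), 1 ≤ depB Ψ
  | _, _, .atom _ _ ψ => dep_pos ψ
  | _, _, .bnot Ψ => depB_pos Ψ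
  | _, _, .band Ψ₁ Ψ₂ => le_trans (depB_pos Ψ₁) (le_max_left _ _)

theorem dep_le_one (σ : HGML R C ar) (h : dep σ ≤ 1) : ∃ a, σ = HGML.color a := by
  cases σ with
  | color a => exact ⟨a, rfl⟩
  | fnot ψ => have := dep_pos ψ; simp only [dep] at h; omega
  | fand ψ χ =>
      have := dep_pos ψ
      have h2 := le_max_left (dep ψ) (dep χ)
      simp only [dep] at h; omega
  | count r i N hN Ψ => have := depB_pos Ψ; simp only [dep] at h; omega

theorem atoms_dep : ∀ {k : ℕ} {i : Fin k} (Ψ : BComb R C ar k i),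
    ∀ ψ ∈ atoms Ψ, dep ψ ≤ depB Ψ
  | _, _, .atom _ _ ψ => by simp [atoms, depB]
  | _, _, .bnot Ψ => by simpa [atoms, depB] using atoms_dep Ψ
  | _, _, .band Ψ₁ Ψ₂ => by
      intro ψ h
      simp only [atoms, List.mem_append] at h
      rcases h with h | h
      · exact le_trans (atoms_dep Ψ₁ ψ h) (le_max_left _ _)
      · exact le_trans (atoms_dep Ψ₂ ψ h) (le_max_right _ _)

theorem self_mem (φ : HGML R C ar) : φ ∈ subf φ := by
  cases φ <;> simp [subf]

theorem atoms_subset : ∀ {k : ℕ} {i : Fin k} (Ψ : BComb R C ar k i),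
    ∀ ψ ∈ atoms Ψ, ψ ∈ subfB Ψ
  | _, _, .atom _ _ ψ => by simpa [atoms, subfB] using self_mem ψ
  | _, _, .bnot Ψ => atoms_subset Ψ
  | _, _, .band Ψ₁ Ψ₂ => by
      intro ψ h
      simp only [atoms, List.mem_append] at h
      simp only [subfB, List.mem_append]
      rcases h with h | h
      · exact Or.inl (atoms_subset Ψ₁ ψ h)
      · exact Or.inr (atoms_subset Ψ₂ ψ h)

mutual
theorem closure : ∀ (φ : HGML R C ar), ∀ σ ∈ subf φ, ∀ τ ∈ children σ, τ ∈ subf φ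
  | .color a => by
      intro σ hσ τ hτ
      simp only [subf, List.mem_singleton] at hσ
      subst hσ
      simp [children] at hτ
  | .fnot ψ => by
      intro σ hσ τ hτ
      rcases List.mem_cons.mp hσ with h | h
      · subst h
        simp only [children, List.mem_singleton] at hτ
        rw [hτ]
        exact List.mem_cons_of_mem _ (self_mem ψ)
      · exact List.mem_cons_of_mem _ (closure ψ σ h τ hτ)
  | .fand ψ χ => by
      intro σ hσ τ hτ
      rcases List.mem_cons.mp hσ with h | h
      · subst h
        simp only [children, List.mem_cons, List.not_mem_nil, or_false] at hτ
        rcases hτ with h | h <;> rw [h]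
        · exact List.mem_cons_of_mem _ (List.mem_append.mpr (Or.inl (self_mem ψ)))
        · exact List.mem_cons_of_mem _ (List.mem_append.mpr (Or.inr (self_mem χ)))
      · rcases List.mem_append.mp h with h | h
        · exact List.mem_cons_of_mem _ (List.mem_append.mpr (Or.inl (closure ψ σ h τ hτ)))
        · exact List.mem_cons_of_mem _ (List.mem_append.mpr (Or.inr (closure χ σ h τ hτ)))
  | .count r i N hN Ψ => by
      intro σ hσ τ hτ
      rcases List.mem_cons.mp hσ with h | h
      · subst h
        simp only [children] at hτ
        exact List.mem_cons_of_mem _ (atoms_subset Ψ τ hτ)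
      · exact List.mem_cons_of_mem _ (closureB Ψ σ h τ hτ)

theorem closureB : ∀ {k : ℕ} {i : Fin k} (Ψ : BComb R C ar k i),
    ∀ σ ∈ subfB Ψ, ∀ τ ∈ children σ, τ ∈ subfB Ψ
  | _, _, .atom _ _ ψ => closure ψ
  | _, _, .bnot Ψ => closureB Ψ
  | _, _, .band Ψ₁ Ψ₂ => by
      intro σ hσ τ hτ
      rcases List.mem_append.mp hσ with h | h
      · exact List.mem_append.mpr (Or.inl (closureB Ψ₁ σ h τ hτ))
      · exact List.mem_append.mpr (Or.inr (closureB Ψ₂ σ h τ hτ))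
end

def readF (ls : List (HGML R C ar)) (x : Fin ls.length → ℝ) (ψ : HGML R C ar) : Prop :=
  ∃ t : Fin ls.length, ls.get t = ψ ∧ x t = 1

def evalB (ls : List (HGML R C ar)) :
    {k : ℕ} → {i : Fin k} → BComb R C ar k i → Set ((Fin ls.length → ℝ) × ℕ) → Prop
  | _, _, .atom j _ ψ, S => ∃ x, (x, (j : ℕ)) ∈ S ∧ readF ls x ψ
  | _, _, .bnot Ψ, S => ¬ evalB ls Ψ S
  | _, _, .band Ψ₁ Ψ₂, S => evalB ls Ψ₁ S ∧ evalB ls Ψ₂ S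

def evalF (ls : List (HGML R C ar)) (σ : HGML R C ar)
    (prev : HGML R C ar → Prop)
    (ms : Multiset (Set ((Fin ls.length → ℝ) × ℕ) × R)) : Prop :=
  match σ with
  | .color a => prev (.color a)
  | .fnot ψ => ¬ prev ψ
  | .fand ψ χ => prev ψ ∧ prev χ
  | .count r i N _ Ψ =>
      N ≤ Multiset.countP
        (fun m => m.2 = r ∧ (∀ x, (x, (i : ℕ)) ∉ m.1) ∧ evalB ls Ψ m.1) ms

def dFun (cc n : ℕ) : ℕ → ℕ
  | 0 => cc
  | _ + 1 => n

noncomputable def theNet (ls : List (HGML R C ar)) (cc : ℕ) (colIdx : C → Fin cc) :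
    HRMPNN R where
  d := dFun cc ls.length
  M := fun ℓ => Set ((Fin (dFun cc ls.length ℓ) → ℝ) × ℕ) × R
  A := fun ℓ => (Fin (dFun cc ls.length ℓ) → ℝ) ×
      Multiset (Set ((Fin (dFun cc ls.length ℓ) → ℝ) × ℕ) × R)
  msg := fun _ r S => (S, r)
  agg := fun _ hv ms => (hv, ms)
  up := fun ℓ => match ℓ with
    | 0 => fun hv _ t =>
        if ∃ a : C, ls.get t = HGML.color a ∧ hv (colIdx a) = 1 then 1 else 0
    | _ + 1 => fun hv p t =>
        if evalF ls (ls.get t) (readF ls hv) p.2 then 1 else 0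

theorem h_unfold0 {V : Type} [DecidableEq V] (ls : List (HGML R C ar)) (cc : ℕ)
    (colIdx : C → Fin cc) (H : RelHG V R ar) (x : V → Fin cc → ℝ) (v : V) :
    (theNet ls cc colIdx).h H x 1 v =
      fun t => if ∃ a : C, ls.get t = HGML.color a ∧ x v (colIdx a) = 1 then 1 else 0 :=
  rfl

theorem h_unfold {V : Type} [DecidableEq V] (ls : List (HGML R C ar)) (cc : ℕ)
    (colIdx : C → Fin cc) (H : RelHG V R ar) (x : V → Fin cc → ℝ) (ℓ : ℕ) (v : V) :
    (theNet ls cc colIdx).h H x (ℓ + 2) v =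
      fun t => if evalF ls (ls.get t)
          (readF ls ((theNet ls cc colIdx).h H x (ℓ + 1) v))
          ((H.incid v).val.map fun ei =>
            ({p : (Fin ls.length → ℝ) × ℕ | ∃ j : Fin (ar ei.1.1), j ≠ ei.2 ∧
                p = ((theNet ls cc colIdx).h H x (ℓ + 1) (ei.1.2 j), (j : ℕ))}, ei.1.1))
        then 1 else 0 :=
  rfl

theorem evalB_correct {V : Type} (ls : List (HGML R C ar)) (H : RelHG V R ar) (c : V → C)
    (F : V → Fin ls.length → ℝ) :
    ∀ {k : ℕ} {i : Fin k} (Ψ : BComb R C ar k i),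
      (∀ ψ ∈ atoms Ψ, ∀ u, readF ls (F u) ψ ↔ HGML.sat H c ψ u) →
      ∀ w : Fin k → V,
        (evalB ls Ψ {p | ∃ j, j ≠ i ∧ p = (F (w j), (j : ℕ))} ↔ BComb.sat H c Ψ w)
  | _, _, .atom j hne ψ, hats, w => by
      simp only [evalB, BComb.sat]
      constructor
      · rintro ⟨x, ⟨j', hj', heq⟩, hr⟩
        have hjj : j = j' := Fin.ext (congrArg Prod.snd heq)
        subst hjj
        have hx : x = F (w j) := congrArg Prod.fst heq
        subst hx
        exact (hats ψ (by simp [atoms]) (w j)).mp hr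
      · intro hs
        exact ⟨F (w j), ⟨j, hne, rfl⟩, (hats ψ (by simp [atoms]) (w j)).mpr hs⟩
  | _, _, .bnot Ψ, hats, w => by
      simp only [evalB, BComb.sat]
      exact not_congr (evalB_correct ls H c F Ψ hats w)
  | _, _, .band Ψ₁ Ψ₂, hats, w => by
      simp only [evalB, BComb.sat]
      exact and_congr
        (evalB_correct ls H c F Ψ₁
          (fun ψ h => hats ψ (by simp only [atoms, List.mem_append]; exact Or.inl h)) w)
        (evalB_correct ls H c F Ψ₂
          (fun ψ h => hats ψ (by simp only [atoms, List.mem_append]; exact Or.inr h)) w)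

theorem count_correct {V : Type} [Fintype V] [DecidableEq V]
    (ls : List (HGML R C ar)) (H : RelHG V R ar) (c : V → C)
    (F : V → Fin ls.length → ℝ)
    (r : R) (i : Fin (ar r)) (N : ℕ) (hN : 1 ≤ N) (Ψ : BComb R C ar (ar r) i)
    (hats : ∀ ψ ∈ atoms Ψ, ∀ u, readF ls (F u) ψ ↔ HGML.sat H c ψ u)
    (v : V) :
    (N ≤ Multiset.countP
        (fun m => m.2 = r ∧ (∀ x, (x, (i : ℕ)) ∉ m.1) ∧ evalB ls Ψ m.1)
        ((H.incid v).val.map fun ei =>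
          ({p : (Fin ls.length → ℝ) × ℕ | ∃ j : Fin (ar ei.1.1), j ≠ ei.2 ∧
              p = (F (ei.1.2 j), (j : ℕ))}, ei.1.1)))
      ↔ HGML.sat H c (HGML.count r i N hN Ψ) v := by
  set f : (Σ e : Σ r' : R, Fin (ar r') → V, Fin (ar e.1)) →
      Set ((Fin ls.length → ℝ) × ℕ) × R :=
    fun ei => ({p | ∃ j : Fin (ar ei.1.1), j ≠ ei.2 ∧ p = (F (ei.1.2 j), (j : ℕ))},
      ei.1.1) with hf
  set pr : Set ((Fin ls.length → ℝ) × ℕ) × R → Prop :=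
    fun m => m.2 = r ∧ (∀ x, (x, (i : ℕ)) ∉ m.1) ∧ evalB ls Ψ m.1 with hpr
  set T : Finset (Fin (ar r) → V) := Finset.univ.filter
      (fun w => w i = v ∧ (⟨r, w⟩ : Σ r' : R, Fin (ar r') → V) ∈ H.edges ∧
        BComb.sat H c Ψ w) with hT
  set g : (Fin (ar r) → V) → (Σ e : Σ r' : R, Fin (ar r') → V, Fin (ar e.1)) :=
    fun w => ⟨⟨r, w⟩, i⟩ with hg
  have hfilter : Finset.filter (fun ei => pr (f ei)) (H.incid v) = T.image g := by
    ext ei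
    simp only [Finset.mem_filter, Finset.mem_image]
    constructor
    · rintro ⟨hin, hp⟩
      obtain ⟨⟨r', w⟩, pos⟩ := ei
      obtain ⟨hr, hpos, hev⟩ := hp
      simp only [hf] at hr hpos hev
      dsimp at hr hpos hev
      subst hr
      have hpe : pos = i := by
        by_contra hne
        exact hpos (F (w i)) ⟨i, fun h => hne h.symm, rfl⟩
      subst hpe
      rw [RelHG.incid, Finset.mem_filter, Finset.mem_sigma] at hin
      obtain ⟨⟨hedge, -⟩, hvv⟩ := hin
      dsimp at hvv
      refine ⟨w, Finset.mem_filter.mpr ⟨Finset.mem_univ _, hvv, hedge, ?_⟩, rfl⟩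
      exact (evalB_correct ls H c F Ψ hats w).mp hev
    · rintro ⟨w, hw, rfl⟩
      rw [Finset.mem_filter] at hw
      obtain ⟨-, hwi, hedge, hsat⟩ := hw
      constructor
      · rw [RelHG.incid, Finset.mem_filter, Finset.mem_sigma]
        exact ⟨⟨hedge, Finset.mem_univ _⟩, hwi⟩
      · refine ⟨rfl, ?_, ?_⟩
        · rintro x ⟨j, hj, heq⟩
          exact hj (Fin.ext (congrArg Prod.snd heq).symm)
        · exact (evalB_correct ls H c F Ψ hats w).mpr hsat
  have hginj : Set.InjOn g T := by
    intro w _ w' _ h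
    simp only [hg] at h
    have h1 : (⟨r, w⟩ : Σ r' : R, Fin (ar r') → V) = ⟨r, w'⟩ := congrArg Sigma.fst h
    injection h1 with h2 h3
  have hcard : Multiset.countP pr ((H.incid v).val.map f) = T.card := by
    rw [Multiset.countP_map]
    have h1 : Multiset.card (Multiset.filter (fun a => pr (f a)) (H.incid v).val)
        = (Finset.filter (fun ei => pr (f ei)) (H.incid v)).card := rfl
    rw [h1, hfilter, Finset.card_image_of_injOn hginj]
  rw [hcard]
  show N ≤ T.card ↔ HGML.sat H c (HGML.count r i N hN Ψ) v
  simp only [HGML.sat]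
  constructor
  · intro hle
    exact ⟨T, hle, fun w hw => (Finset.mem_filter.mp hw).2⟩
  · rintro ⟨s, hsN, hall⟩
    refine le_trans hsN (Finset.card_le_card ?_)
    intro w hw
    exact Finset.mem_filter.mpr ⟨Finset.mem_univ _, hall w hw⟩

theorem main_inv {V : Type} [Fintype V] [DecidableEq V] [Fintype C]
    (ls : List (HGML R C ar))
    (hcl : ∀ σ ∈ ls, ∀ τ ∈ children σ, τ ∈ ls)
    (H : RelHG V R ar) (c : V → C)
    (x : V → Fin (Fintype.card C) → ℝ)
    (hxval : ∀ (u : V) (a : C), x u (Fintype.equivFin C a) = if c u = a then 1 else 0) :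
    ∀ ℓ : ℕ, ∀ (v : V) (t : Fin ls.length), dep (ls.get t) ≤ ℓ + 1 →
      (theNet ls (Fintype.card C) (Fintype.equivFin C)).h H x (ℓ + 1) v t
        = if HGML.sat H c (ls.get t) v then 1 else 0 := by
  intro ℓ
  induction ℓ with
  | zero =>
      intro v t ht
      obtain ⟨a, ha⟩ := dep_le_one _ ht
      have e1 := congrFun (h_unfold0 ls (Fintype.card C) (Fintype.equivFin C) H x v) t
      show (theNet ls (Fintype.card C) (Fintype.equivFin C)).h H x 1 v t
          = if HGML.sat H c (ls.get t) v then 1 else 0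
      rw [e1, ha]
      have hiff : (∃ a' : C, HGML.color (ar := ar) a = HGML.color a' ∧
          x v (Fintype.equivFin C a') = 1) ↔ c v = a := by
        constructor
        · rintro ⟨a', ha', hval⟩
          have haa : a = a' := by injection ha'
          subst haa
          rw [hxval] at hval
          by_contra hne
          rw [if_neg hne] at hval
          norm_num at hval
        · intro h
          exact ⟨a, rfl, by rw [hxval, if_pos h]⟩
      simp only [hiff, HGML.sat]
      exact if_congr Iff.rfl rfl rfl
  | succ ℓ IH =>
      intro v t ht
      simp only [h_unfold]
      have hread : ∀ ψ ∈ ls, dep ψ ≤ ℓ + 1 → ∀ u : V,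
          (readF ls ((theNet ls (Fintype.card C) (Fintype.equivFin C)).h H x (ℓ + 1) u) ψ
            ↔ HGML.sat H c ψ u) := by
        intro ψ hmem hdep u
        constructor
        · rintro ⟨s, hs, h1⟩
          have h2 := IH u s (by rw [hs]; exact hdep)
          rw [hs] at h2
          by_contra hns
          rw [h2, if_neg hns] at h1
          norm_num at h1
        · intro hsat
          obtain ⟨s, hs⟩ := List.mem_iff_get.mp hmem
          refine ⟨s, hs, ?_⟩
          have h2 := IH u s (by rw [hs]; exact hdep)
          rw [hs] at h2
          rw [h2, if_pos hsat]
      have hmemt : ls.get t ∈ ls := List.get_mem ls t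
      have key : evalF ls (ls.get t)
          (readF ls ((theNet ls (Fintype.card C) (Fintype.equivFin C)).h H x (ℓ + 1) v))
          ((H.incid v).val.map fun ei =>
            ({p : (Fin ls.length → ℝ) × ℕ | ∃ j : Fin (ar ei.1.1), j ≠ ei.2 ∧
                p = ((theNet ls (Fintype.card C) (Fintype.equivFin C)).h H x (ℓ + 1) (ei.1.2 j),
                  (j : ℕ))}, ei.1.1))
          ↔ HGML.sat H c (ls.get t) v := by
        cases hσ : ls.get t with
        | color a =>
            rw [hσ] at ht hmemt
            simp only [evalF]
            exact hread _ hmemt (by simp [dep]) v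
        | fnot ψ =>
            rw [hσ] at ht hmemt
            have hψ : ψ ∈ ls := hcl _ hmemt ψ (by simp [children])
            have hdψ : dep ψ ≤ ℓ + 1 := by simp only [dep] at ht; omega
            simp only [evalF, HGML.sat]
            exact not_congr (hread ψ hψ hdψ v)
        | fand ψ χ =>
            rw [hσ] at ht hmemt
            have hψ : ψ ∈ ls := hcl _ hmemt ψ (by simp [children])
            have hχ : χ ∈ ls := hcl _ hmemt χ (by simp [children])
            have hd : dep ψ ≤ ℓ + 1 ∧ dep χ ≤ ℓ + 1 := by
              simp only [dep] at ht
              constructor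
              · have := le_max_left (dep ψ) (dep χ); omega
              · have := le_max_right (dep ψ) (dep χ); omega
            simp only [evalF, HGML.sat]
            exact and_congr (hread ψ hψ hd.1 v) (hread χ hχ hd.2 v)
        | count r i N hN Ψ =>
            rw [hσ] at ht hmemt
            have hats : ∀ ψ ∈ atoms Ψ, ∀ u : V,
                readF ls ((theNet ls (Fintype.card C) (Fintype.equivFin C)).h H x (ℓ + 1) u) ψ
                  ↔ HGML.sat H c ψ u := by
              intro ψ hψ u
              have hmem : ψ ∈ ls := hcl _ hmemt ψ (by simpa [children] using hψ)
              have hdep : dep ψ ≤ ℓ + 1 := by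
                have h1 := atoms_dep Ψ ψ hψ
                simp only [dep] at ht
                omega
              exact hread ψ hmem hdep u
            simp only [evalF]
            exact count_correct ls H c _ r i N hN Ψ hats v
      simp only [key]

end Cap

/-- Each HGML classifier is captured by an HR-MPNN: for every HGML
formula `φ(x)` there are `L ≥ 0`, an HR-MPNN with `L` layers whose initial feature map
assigns to each node the one-hot encoding of its color, and a coordinate `p` of the
final feature vectors, such that on every relational hypergraph the `p`-th entry of
`h_v⁽ᴸ⁾` is `1` if `G ⊨ φ(v)` and `0` otherwise. -/
theorem hgml_captured_by_HRMPNN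
    {R C : Type} [Fintype R] [DecidableEq R] [Fintype C] [DecidableEq C]
    {ar : R → ℕ} (har : ∀ r : R, 1 ≤ ar r) (φ : HGML R C ar) :
    ∃ (L : ℕ) (net : HRMPNN R),
      net.d 0 = Fintype.card C ∧
      ∃ p : Fin (net.d L),
        ∀ (V : Type) [Fintype V] [DecidableEq V]
          (H : RelHG V R ar) (c : V → C) (v : V),
          (HGML.sat H c φ v →
            net.h H (fun u i => if ((Fintype.equivFin C) (c u) : ℕ) = (i : ℕ) then 1 else 0)
              L v p = 1) ∧
          (¬ HGML.sat H c φ v →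
            net.h H (fun u i => if ((Fintype.equivFin C) (c u) : ℕ) = (i : ℕ) then 1 else 0)
              L v p = 0) := by
  classical
  obtain ⟨L₀, hL₀⟩ : ∃ L₀, Cap.dep φ = L₀ + 1 :=
    ⟨Cap.dep φ - 1, by have := Cap.dep_pos φ; omega⟩
  refine ⟨L₀ + 1, Cap.theNet (Cap.subf φ) (Fintype.card C) (Fintype.equivFin C), rfl, ?_⟩
  obtain ⟨t, ht⟩ := List.mem_iff_get.mp (Cap.self_mem φ)
  refine ⟨t, ?_⟩
  intro V _ _ H c v
  have hxval : ∀ (u : V) (a : C),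
      (if ((Fintype.equivFin C) (c u) : ℕ) = ((Fintype.equivFin C a : Fin (Fintype.card C)) : ℕ)
        then (1 : ℝ) else 0)
      = @ite ℝ (c u = a) (Classical.propDecidable _) 1 0 := by
    intro u a
    by_cases h : c u = a
    · simp [h]
    · rw [if_neg h, if_neg]
      intro hval
      exact h ((Fintype.equivFin C).injective (Fin.ext hval))
  have h := Cap.main_inv (Cap.subf φ) (Cap.closure φ) H c
    (fun u i => if ((Fintype.equivFin C) (c u) : ℕ) = (i : ℕ) then (1 : ℝ) else 0)
    hxval L₀ v t (by rw [ht, hL₀])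
  rw [ht] at h
  constructor
  · intro hs
    exact h.trans (if_pos hs)
  · intro hs
    exact h.trans (if_neg hs)
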